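/- Let T = co(x_0,...,x_n) ⊂ ℝ^n be a simplex of diameter h, and let f : ℝ^n → ℝ be C², with ‖H(x)‖₂ ≤ β for all x ∈ T, where H is the Hessian of f. Then for every x = Σ_k λ_k x_k ∈ T (barycentric coordinates λ_k), |f(x) − Σ_k λ_k f(x_k)| ≤ β h². -/

import Mathlib

open Matrix

/-- Euclidean norm on `Fin n → ℝ`. -/
noncomputable def euclNorm {n : ℕ} (x : Fin n → ℝ) : ℝ := Real.sqrt (∑ i, x i ^ 2)

/-- Spectral (ℓ²-operator) norm of a real `n×n` matrix. -/
noncomputable def matSpectralNorm {n : ℕ} (A : Matrix (Fin n) (Fin n) ℝ) : ℝ :=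
  sSup {r : ℝ | ∃ x : Fin n → ℝ, euclNorm x = 1 ∧ r = euclNorm (A.mulVec x)}

/-- Partial derivative of `φ` in the `i`-th coordinate direction. -/
noncomputable def pderiv' {n : ℕ} (φ : (Fin n → ℝ) → ℝ) (i : Fin n) (y : Fin n → ℝ) : ℝ :=
  fderiv ℝ φ y (Pi.single i 1)

/-- Hessian matrix of `φ` at `y`. -/
noncomputable def hessian {n : ℕ} (φ : (Fin n → ℝ) → ℝ) (y : Fin n → ℝ) :
    Matrix (Fin n) (Fin n) ℝ :=
  Matrix.of fun i j => pderiv' (fun z => pderiv' φ j z) i y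

section Helpers

lemma euclNorm_eq {n : ℕ} (x : Fin n → ℝ) :
    euclNorm x = ‖(WithLp.equiv 2 (Fin n → ℝ)).symm x‖ := by
  rw [euclNorm, EuclideanSpace.norm_eq]
  congr 1
  refine Finset.sum_congr rfl fun i _ => ?_
  simp only [WithLp.equiv_symm_apply, WithLp.ofLp_toLp, Real.norm_eq_abs, sq_abs]

lemma euclNorm_nonneg {n : ℕ} (x : Fin n → ℝ) : 0 ≤ euclNorm x := Real.sqrt_nonneg _

lemma euclNorm_smul {n : ℕ} (c : ℝ) (x : Fin n → ℝ) : euclNorm (c • x) = |c| * euclNorm x := by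
  rw [euclNorm_eq, euclNorm_eq]
  have : (WithLp.equiv 2 (Fin n → ℝ)).symm (c • x) = c • (WithLp.equiv 2 (Fin n → ℝ)).symm x := rfl
  rw [this, norm_smul, Real.norm_eq_abs]

lemma euclNorm_eq_zero {n : ℕ} {x : Fin n → ℝ} (hx : euclNorm x = 0) : x = 0 := by
  rw [euclNorm_eq, norm_eq_zero] at hx
  have := congrArg (WithLp.equiv 2 (Fin n → ℝ)) hx
  simpa using this

lemma abs_dotProduct_le {n : ℕ} (a b : Fin n → ℝ) : |a ⬝ᵥ b| ≤ euclNorm a * euclNorm b := by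
  rw [euclNorm_eq, euclNorm_eq]
  have h := abs_real_inner_le_norm ((WithLp.equiv 2 (Fin n → ℝ)).symm a)
    ((WithLp.equiv 2 (Fin n → ℝ)).symm b)
  have : (inner ℝ ((WithLp.equiv 2 (Fin n → ℝ)).symm a) ((WithLp.equiv 2 (Fin n → ℝ)).symm b) : ℝ)
      = a ⬝ᵥ b := by
    simp [PiLp.inner_apply, dotProduct, WithLp.equiv_symm_apply, mul_comm]
  rwa [this] at h

lemma matSpectralNorm_nonneg {n : ℕ} (A : Matrix (Fin n) (Fin n) ℝ) : 0 ≤ matSpectralNorm A := by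
  apply Real.sSup_nonneg
  rintro r ⟨z, hz, rfl⟩
  exact euclNorm_nonneg _

lemma euclNorm_mulVec_le {n : ℕ} (A : Matrix (Fin n) (Fin n) ℝ) (u : Fin n → ℝ) :
    euclNorm (A.mulVec u) ≤ matSpectralNorm A * euclNorm u := by
  classical
  set L : EuclideanSpace ℝ (Fin n) →L[ℝ] EuclideanSpace ℝ (Fin n) :=
    LinearMap.toContinuousLinearMap
      (((WithLp.linearEquiv 2 ℝ (Fin n → ℝ)).symm.toLinearMap.comp A.mulVecLin).comp
        (WithLp.linearEquiv 2 ℝ (Fin n → ℝ)).toLinearMap) with hLdef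
  have hL : ∀ z : Fin n → ℝ, euclNorm (A.mulVec z) ≤ ‖L‖ * euclNorm z := by
    intro z
    rw [euclNorm_eq, euclNorm_eq]
    have : (WithLp.equiv 2 (Fin n → ℝ)).symm (A.mulVec z)
        = L ((WithLp.equiv 2 (Fin n → ℝ)).symm z) := rfl
    rw [this]
    exact L.le_opNorm _
  have hbdd : BddAbove {r : ℝ | ∃ x : Fin n → ℝ, euclNorm x = 1 ∧ r = euclNorm (A.mulVec x)} := by
    refine ⟨‖L‖, ?_⟩
    rintro r ⟨z, hz, rfl⟩
    have h2 := hL z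
    rwa [hz, mul_one] at h2
  rcases eq_or_ne (euclNorm u) 0 with h0 | h0
  · rw [euclNorm_eq_zero h0, Matrix.mulVec_zero]
    have : euclNorm (0 : Fin n → ℝ) = 0 := by simp [euclNorm]
    rw [this, mul_zero]
  · have hc : 0 < euclNorm u := lt_of_le_of_ne (euclNorm_nonneg u) (Ne.symm h0)
    set c := euclNorm u with hcdef
    have hz1 : euclNorm (c⁻¹ • u) = 1 := by
      rw [euclNorm_smul, abs_inv, abs_of_pos hc, ← hcdef, inv_mul_cancel₀ (ne_of_gt hc)]
    have hmem : euclNorm (A.mulVec (c⁻¹ • u))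
        ∈ {r : ℝ | ∃ x : Fin n → ℝ, euclNorm x = 1 ∧ r = euclNorm (A.mulVec x)} :=
      ⟨c⁻¹ • u, hz1, rfl⟩
    have hle : euclNorm (A.mulVec (c⁻¹ • u)) ≤ matSpectralNorm A := le_csSup hbdd hmem
    rw [Matrix.mulVec_smul, euclNorm_smul, abs_inv, abs_of_pos hc] at hle
    calc euclNorm (A.mulVec u) = c * (c⁻¹ * euclNorm (A.mulVec u)) := by
          field_simp
      _ ≤ c * matSpectralNorm A := by
          exact mul_le_mul_of_nonneg_left hle (le_of_lt hc)
      _ = matSpectralNorm A * euclNorm u := by rw [mul_comm, hcdef]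

lemma sum_single_eq {n : ℕ} (w : Fin n → ℝ) : ∑ i, w i • (Pi.single i 1 : Fin n → ℝ) = w := by
  funext k
  simp [Finset.sum_apply, Pi.single_apply]

lemma hessian_entry {n : ℕ} {f : (Fin n → ℝ) → ℝ} (hf : ContDiff ℝ 2 f)
    (y : Fin n → ℝ) (i j : Fin n) :
    hessian f y i j = fderiv ℝ (fderiv ℝ f) y (Pi.single i 1) (Pi.single j 1) := by
  have hf' : ContDiff ℝ 1 (fderiv ℝ f) := hf.fderiv_right (by norm_num)
  have hd : DifferentiableAt ℝ (fderiv ℝ f) y := (hf'.differentiable one_ne_zero) y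
  have : fderiv ℝ (fun z => fderiv ℝ f z (Pi.single j 1)) y
      = (fderiv ℝ f y).comp (fderiv ℝ (fun _ : Fin n → ℝ => Pi.single j (1:ℝ)) y)
        + (fderiv ℝ (fderiv ℝ f) y).flip (Pi.single j 1) :=
    fderiv_clm_apply hd (differentiableAt_const _)
  simp only [hessian, Matrix.of_apply, pderiv', this]
  simp

lemma bilin_eq_dot {n : ℕ} {f : (Fin n → ℝ) → ℝ} (hf : ContDiff ℝ 2 f)
    (y w : Fin n → ℝ) :
    fderiv ℝ (fderiv ℝ f) y w w = w ⬝ᵥ (hessian f y).mulVec w := by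
  set B := fderiv ℝ (fderiv ℝ f) y with hB
  have key : B w w = ∑ j, ∑ i, w i * w j * (B (Pi.single i 1) (Pi.single j 1)) := by
    conv_lhs => rw [← sum_single_eq w]
    rw [map_sum]
    refine Finset.sum_congr rfl fun j _ => ?_
    rw [map_sum, ContinuousLinearMap.sum_apply]
    refine Finset.sum_congr rfl fun i _ => ?_
    rw [B.map_smul, ContinuousLinearMap.smul_apply, (B _).map_smul, smul_eq_mul, smul_eq_mul]
    ring
  rw [key, Finset.sum_comm, dotProduct]
  refine Finset.sum_congr rfl fun i _ => ?_
  rw [Matrix.mulVec, dotProduct, Finset.mul_sum]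
  refine Finset.sum_congr rfl fun j _ => ?_
  rw [hessian_entry hf]
  ring

lemma taylor_key {n : ℕ} {T : Set (Fin n → ℝ)} (hT : Convex ℝ T)
    {f : (Fin n → ℝ) → ℝ} (hf : ContDiff ℝ 2 f)
    {β h : ℝ}
    (hH : ∀ y ∈ T, matSpectralNorm (hessian f y) ≤ β)
    (hd : ∀ p ∈ T, ∀ q ∈ T, euclNorm (p - q) ≤ h)
    {x y : Fin n → ℝ} (hx : x ∈ T) (hy : y ∈ T) :
    |f y - f x - fderiv ℝ f x (y - x)| ≤ β * h ^ 2 := by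
  have hβ : 0 ≤ β := le_trans (matSpectralNorm_nonneg _) (hH x hx)
  have hh : 0 ≤ h := le_trans (euclNorm_nonneg (x - x)) (hd x hx x hx)
  set w : Fin n → ℝ := y - x with hw
  have hwh : euclNorm w ≤ h := hd y hy x hx
  set γ : ℝ → (Fin n → ℝ) := fun t => x + t • w with hγ
  have hγT : ∀ t ∈ Set.Icc (0:ℝ) 1, γ t ∈ T := by
    intro t ht
    have : γ t = (1 - t) • x + t • y := by
      simp only [hγ, hw]
      module
    rw [this]
    exact hT hx hy (by linarith [ht.1, ht.2]) ht.1 (by ring)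
  have hf1 : Differentiable ℝ f := hf.differentiable (by norm_num)
  have hf' : ContDiff ℝ 1 (fderiv ℝ f) := hf.fderiv_right (by norm_num)
  have hf'd : Differentiable ℝ (fderiv ℝ f) := hf'.differentiable one_ne_zero
  set p : ℝ → ℝ := fun t => fderiv ℝ f (γ t) w with hp
  have hline : ∀ t : ℝ, HasDerivAt γ w t := by
    intro t
    have h1 : HasDerivAt (fun t : ℝ => t • w) w t := by
      simpa using (hasDerivAt_id t).smul_const w
    exact h1.const_add x
  have hg : ∀ t : ℝ, HasDerivAt (fun s => f (γ s)) (p t) t := by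
    intro t
    exact ((hf1 (γ t)).hasFDerivAt).comp_hasDerivAt t (hline t)
  have hpd : ∀ t : ℝ, HasDerivAt p (fderiv ℝ (fderiv ℝ f) (γ t) w w) t := by
    intro t
    have h1 : HasFDerivAt (fun z => fderiv ℝ f z w)
        ((fderiv ℝ (fderiv ℝ f) (γ t)).flip w) (γ t) := by
      have := ((hf'd (γ t)).hasFDerivAt).clm_apply (hasFDerivAt_const w (γ t))
      simpa using this
    have := h1.comp_hasDerivAt t (hline t)
    exact this
  set M : ℝ := β * h ^ 2 with hM
  have hbound : ∀ t ∈ Set.Icc (0:ℝ) 1, |fderiv ℝ (fderiv ℝ f) (γ t) w w| ≤ M := by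
    intro t ht
    rw [bilin_eq_dot hf]
    calc |w ⬝ᵥ (hessian f (γ t)).mulVec w| ≤ euclNorm w * euclNorm ((hessian f (γ t)).mulVec w) :=
          abs_dotProduct_le _ _
      _ ≤ euclNorm w * (matSpectralNorm (hessian f (γ t)) * euclNorm w) := by
          exact mul_le_mul_of_nonneg_left (euclNorm_mulVec_le _ _) (euclNorm_nonneg _)
      _ ≤ h * (β * h) := by
          apply mul_le_mul hwh _ _ hh
          · exact mul_le_mul (hH _ (hγT t ht)) hwh (euclNorm_nonneg _) hβ
          · exact mul_nonneg (matSpectralNorm_nonneg _) (euclNorm_nonneg _)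
      _ = M := by rw [hM]; ring
  -- p is M-Lipschitz on [0,1]
  have hplip : ∀ t ∈ Set.Icc (0:ℝ) 1, |p t - p 0| ≤ M := by
    intro t ht
    have := Convex.norm_image_sub_le_of_norm_hasDerivWithin_le
      (f := p) (f' := fun s => fderiv ℝ (fderiv ℝ f) (γ s) w w) (C := M)
      (fun s hs => (hpd s).hasDerivWithinAt)
      (fun s hs => by rw [Real.norm_eq_abs]; exact hbound s hs)
      (convex_Icc 0 1) ⟨le_refl 0, zero_le_one⟩ ht
    rw [Real.norm_eq_abs, Real.norm_eq_abs] at this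
    calc |p t - p 0| ≤ M * |t - 0| := this
      _ ≤ M * 1 := by
          apply mul_le_mul_of_nonneg_left _ (by positivity)
          rw [sub_zero, abs_of_nonneg ht.1]; exact ht.2
      _ = M := mul_one M
  -- q(t) = f(γ t) - t * p 0
  have hq : ∀ t : ℝ, HasDerivAt (fun s => f (γ s) - s * p 0) (p t - p 0) t := by
    intro t
    exact (hg t).sub (hasDerivAt_mul_const (p 0))
  have hfin := Convex.norm_image_sub_le_of_norm_hasDerivWithin_le
    (f := fun s => f (γ s) - s * p 0) (f' := fun t => p t - p 0) (C := M)
    (fun s hs => (hq s).hasDerivWithinAt)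
    (fun s hs => by rw [Real.norm_eq_abs]; exact hplip s hs)
    (convex_Icc 0 1) (Set.left_mem_Icc.mpr zero_le_one) (Set.right_mem_Icc.mpr zero_le_one)
  rw [Real.norm_eq_abs, Real.norm_eq_abs] at hfin
  have hγ1 : γ 1 = y := by simp [hγ, hw]
  have hγ0 : γ 0 = x := by simp [hγ]
  have hp0 : p 0 = fderiv ℝ f x (y - x) := by
    show (fderiv ℝ f (γ 0)) w = _
    rw [hγ0, hw]
  have : (f (γ 1) - 1 * p 0) - (f (γ 0) - 0 * p 0) = f y - f x - fderiv ℝ f x (y - x) := by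
    rw [hγ1, hγ0, hp0]; ring
  rw [this] at hfin
  rw [show |(1:ℝ) - 0| = 1 by norm_num, mul_one] at hfin
  exact hfin

end Helpers

/-- affine interpolation error on a simplex: if `‖H(x)‖₂ ≤ β` on the simplex `T`
of diameter `h`, then `|f(x) - Σ λ_k f(x_k)| ≤ β h²`. -/
theorem affine_interpolation_error {n : ℕ}
    (v : Fin (n + 1) → (Fin n → ℝ)) (hv : AffineIndependent ℝ v)
    (h β : ℝ)
    (hdiam : ∀ p ∈ convexHull ℝ (Set.range v), ∀ q ∈ convexHull ℝ (Set.range v),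
      euclNorm (p - q) ≤ h)
    (f : (Fin n → ℝ) → ℝ) (hf : ContDiff ℝ 2 f)
    (hH : ∀ y ∈ convexHull ℝ (Set.range v), matSpectralNorm (hessian f y) ≤ β)
    (lam : Fin (n + 1) → ℝ) (hlam0 : ∀ k, 0 ≤ lam k) (hsum : ∑ k, lam k = 1)
    (x : Fin n → ℝ) (hbar : x = ∑ k, lam k • v k) :
    |f x - ∑ k, lam k * f (v k)| ≤ β * h ^ 2 := by
  set T : Set (Fin n → ℝ) := convexHull ℝ (Set.range v) with hT
  have hvT : ∀ k, v k ∈ T := fun k => subset_convexHull ℝ _ ⟨k, rfl⟩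
  have hxT : x ∈ T := by
    rw [hbar]
    exact (convex_convexHull ℝ _).sum_mem (fun k _ => hlam0 k) hsum (fun k _ => hvT k)
  have hβ : 0 ≤ β := le_trans (matSpectralNorm_nonneg _) (hH x hxT)
  set D := fderiv ℝ f x with hD
  have hz : ∑ k, lam k • (v k - x) = (0 : Fin n → ℝ) := by
    have : ∑ k, lam k • (v k - x) = (∑ k, lam k • v k) - (∑ k, lam k) • x := by
      rw [Finset.sum_smul]
      rw [← Finset.sum_sub_distrib]
      exact Finset.sum_congr rfl fun k _ => smul_sub _ _ _
    rw [this, hsum, one_smul, ← hbar, sub_self]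
  have hDz : ∑ k, lam k * D (v k - x) = 0 := by
    have : ∑ k, lam k * D (v k - x) = D (∑ k, lam k • (v k - x)) := by
      rw [map_sum]
      exact Finset.sum_congr rfl fun k _ => by rw [D.map_smul, smul_eq_mul]
    rw [this, hz, map_zero]
  have hkey : ∀ k, |f (v k) - f x - D (v k - x)| ≤ β * h ^ 2 := fun k =>
    taylor_key (convex_convexHull ℝ _) hf hH hdiam hxT (hvT k)
  have hsplit : f x - ∑ k, lam k * f (v k)
      = -∑ k, lam k * (f (v k) - f x - D (v k - x)) := by
    have : ∑ k, lam k * (f (v k) - f x - D (v k - x))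
        = (∑ k, lam k * f (v k)) - (∑ k, lam k) * f x - ∑ k, lam k * D (v k - x) := by
      rw [Finset.sum_mul, ← Finset.sum_sub_distrib, ← Finset.sum_sub_distrib]
      exact Finset.sum_congr rfl fun k _ => by ring
    rw [this, hsum, hDz, one_mul, sub_zero]
    ring
  rw [hsplit, abs_neg]
  calc |∑ k, lam k * (f (v k) - f x - D (v k - x))|
      ≤ ∑ k, |lam k * (f (v k) - f x - D (v k - x))| := Finset.abs_sum_le_sum_abs _ _
    _ ≤ ∑ k, lam k * (β * h ^ 2) := by
        refine Finset.sum_le_sum fun k _ => ?_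
        rw [abs_mul, abs_of_nonneg (hlam0 k)]
        exact mul_le_mul_of_nonneg_left (hkey k) (hlam0 k)
    _ = β * h ^ 2 := by rw [← Finset.sum_mul, hsum, one_mul]
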